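/- Perturbative growth rate of a reversible Markov generator: Let V be a finite nonempty index set, A⁰ a real matrix indexed by V with nonnegative off-diagonal entries and zero column sums (∑_{σ'} A⁰_{σ',σ} = 0 for all σ), irreducible, and satisfying detailed balance with respect to a probability vector π⁰ with all entries strictly positive, i.e. π⁰_σ · A⁰_{σ',σ} = π⁰_{σ'} · A⁰_{σ,σ'} for all σ, σ'. Let B be a real matrix indexed by V with nonnegative off-diagonal entries. Suppose ε₁ > 0 and λ : ℝ → ℝ is a function such that for every ε ∈ (0, ε₁), λ(ε) is an eigenvalue of A⁰ + ε·B and every complex eigenvalue of A⁰ + ε·B has real part at most λ(ε). Then λ(ε)/ε tends to ∑_{σ∈V} κ_σ(B) · π⁰_σ as ε → 0⁺, where κ_σ(B) := ∑_{σ'∈V} B_{σ',σ}. -/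

import Mathlib

open Matrix Filter Finset
open scoped NNReal ENNReal Topology

set_option linter.unusedSectionVars false
set_option maxHeartbeats 1000000

/-- A complex number `μ` is an eigenvalue of the real matrix `M`
(via its complexification). -/
def Matrix.IsComplexEigenvalue {V : Type*} [Fintype V] (M : Matrix V V ℝ) (μ : ℂ) : Prop :=
  ∃ v : V → ℂ, v ≠ 0 ∧ (M.map (Complex.ofReal)).mulVec v = μ • v

/-- `A` is irreducible: any two distinct indices are connected by a chain of
strictly positive transition entries. -/
def Matrix.IsIrreducibleMetzlerChain {V : Type*} (A : Matrix V V ℝ) : Prop :=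
  ∀ σ σ' : V, σ ≠ σ' → Relation.TransGen (fun x y => x ≠ y ∧ 0 < A y x) σ σ'

section Aux
variable {V : Type*} [Fintype V] [DecidableEq V]

/-- Maximum principle: kernel of an irreducible generator is spanned by π0. -/
lemma ker_span [Nonempty V] (A0 : Matrix V V ℝ)
    (hA0off : ∀ σ σ' : V, σ ≠ σ' → 0 ≤ A0 σ' σ)
    (hirr : ∀ σ σ' : V, σ ≠ σ' → Relation.TransGen (fun x y => x ≠ y ∧ 0 < A0 y x) σ σ')
    (π0 : V → ℝ) (hπpos : ∀ σ, 0 < π0 σ)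
    (hA0π : A0.mulVec π0 = 0)
    (v : V → ℝ) (hv : A0.mulVec v = 0) : ∃ r : ℝ, v = r • π0 := by
  set g : V → ℝ := fun σ => v σ / π0 σ with hg
  obtain ⟨σs, -, hmax⟩ := Finset.exists_max_image (Finset.univ : Finset V) g ⟨Classical.arbitrary V, Finset.mem_univ _⟩
  have hmax' : ∀ σ, g σ ≤ g σs := fun σ => hmax σ (Finset.mem_univ σ)
  -- the set where the max is attained absorbs incoming edges
  have propagate : ∀ σ' : V, g σ' = g σs → ∀ σ : V, σ ≠ σ' → 0 < A0 σ' σ → g σ = g σs := by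
    intro σ' hσ' σ hne hpos
    have hsum : ∑ τ, A0 σ' τ * π0 τ * (g τ - g σs) = 0 := by
      have h1 : ∑ τ, A0 σ' τ * π0 τ * g τ = 0 := by
        have : ∀ τ, A0 σ' τ * π0 τ * g τ = A0 σ' τ * v τ := by
          intro τ
          have hπτ := (hπpos τ).ne'
          rw [hg]
          field_simp
        simp_rw [this]
        have := congrFun hv σ'
        simpa [Matrix.mulVec, dotProduct] using this
      have h2 : ∑ τ, A0 σ' τ * π0 τ = 0 := by
        have := congrFun hA0π σ'
        simpa [Matrix.mulVec, dotProduct] using this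
      calc ∑ τ, A0 σ' τ * π0 τ * (g τ - g σs)
          = ∑ τ, (A0 σ' τ * π0 τ * g τ - A0 σ' τ * π0 τ * g σs) := by
            apply Finset.sum_congr rfl; intros; ring
        _ = (∑ τ, A0 σ' τ * π0 τ * g τ) - (∑ τ, A0 σ' τ * π0 τ) * g σs := by
            rw [Finset.sum_sub_distrib, Finset.sum_mul]
        _ = 0 := by rw [h1, h2]; ring
    have hterm : ∀ τ ∈ Finset.univ, A0 σ' τ * π0 τ * (g τ - g σs) ≤ 0 := by
      intro τ _
      rcases eq_or_ne τ σ' with rfl | hτ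
      · rw [hσ']; simp
      · have h0 : 0 ≤ A0 σ' τ := hA0off τ σ' hτ
        nlinarith [mul_nonneg (mul_nonneg h0 (hπpos τ).le) (sub_nonneg.mpr (hmax' τ))]
    have hz := (Finset.sum_eq_zero_iff_of_nonpos hterm).mp hsum σ (Finset.mem_univ σ)
    have hne0 : A0 σ' σ * π0 σ ≠ 0 := (mul_pos hpos (hπpos σ)).ne'
    rcases mul_eq_zero.mp hz with h | h
    · exact absurd h hne0
    · linarith
  have hall : ∀ σ, g σ = g σs := by
    intro σ
    rcases eq_or_ne σ σs with rfl | hne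
    · rfl
    · have htg := hirr σ σs hne
      refine Relation.TransGen.head_induction_on (motive := fun a _ => g a = g σs) htg ?_ ?_
      · intro a h
        exact propagate σs rfl a h.1 h.2
      · intro a c h _ ih
        exact propagate c ih a h.1 h.2
  refine ⟨g σs, ?_⟩
  ext σ
  have : v σ = g σ * π0 σ := by
    rw [hg]
    exact (div_mul_cancel₀ _ (hπpos σ).ne').symm
  rw [this, hall σ]; simp [mul_comm]


/-- The sum functional as a linear map. -/
def sumLM (V : Type*) [Fintype V] : (V → ℝ) →ₗ[ℝ] ℝ where
  toFun v := ∑ σ, v σ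
  map_add' x y := by simp [Finset.sum_add_distrib]
  map_smul' r x := by simp [Finset.mul_sum]

lemma exists_solution [Nonempty V] (A0 : Matrix V V ℝ)
    (hA0col : ∀ σ : V, ∑ σ', A0 σ' σ = 0)
    (π0 : V → ℝ) (hπpos : ∀ σ, 0 < π0 σ)
    (hA0π : A0.mulVec π0 = 0)
    (hker : ∀ v, A0.mulVec v = 0 → ∃ r : ℝ, v = r • π0)
    (y : V → ℝ) (hy : ∑ σ, y σ = 0) : ∃ u : V → ℝ, A0.mulVec u = y := by
  classical
  set f := A0.mulVecLin with hf
  have hπ0 : π0 ≠ 0 := by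
    intro h
    have := hπpos (Classical.arbitrary V)
    rw [h] at this
    simp at this
  have hkerf : LinearMap.ker f = Submodule.span ℝ {π0} := by
    apply le_antisymm
    · intro v hv
      obtain ⟨r, hr⟩ := hker v (by simpa [hf] using hv)
      rw [Submodule.mem_span_singleton]
      exact ⟨r, hr.symm⟩
    · rw [Submodule.span_singleton_le_iff_mem]
      simpa [hf] using hA0π
  have hrange : LinearMap.range f ≤ LinearMap.ker (sumLM V) := by
    rintro - ⟨v, rfl⟩
    simp only [LinearMap.mem_ker, sumLM, LinearMap.coe_mk, AddHom.coe_mk, hf,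
      Matrix.mulVecLin_apply]
    have h : ∑ σ, (A0.mulVec v) σ = ∑ τ, (∑ σ, A0 σ τ) * v τ := by
      simp only [Matrix.mulVec, dotProduct]
      rw [Finset.sum_comm]
      simp [Finset.sum_mul]
    rw [h]
    simp [hA0col]
  have hcard : 0 < Fintype.card V := Fintype.card_pos
  have h1 : Module.finrank ℝ (LinearMap.ker f) = 1 := by
    rw [hkerf]; exact finrank_span_singleton hπ0
  have hfr : Module.finrank ℝ (V → ℝ) = Fintype.card V := by
    simp [Module.finrank_pi]
  have h2 : Module.finrank ℝ (LinearMap.range f) = Fintype.card V - 1 := by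
    have := LinearMap.finrank_range_add_finrank_ker f
    rw [h1, hfr] at this
    omega
  have hsurj : Function.Surjective (sumLM V) := by
    intro r
    refine ⟨fun _ => r / Fintype.card V, ?_⟩
    simp [sumLM]
    field_simp
  have h3 : Module.finrank ℝ (LinearMap.ker (sumLM V)) = Fintype.card V - 1 := by
    have := LinearMap.finrank_range_add_finrank_ker (sumLM V)
    rw [LinearMap.range_eq_top.mpr hsurj, hfr] at this
    simp only [finrank_top, Module.finrank_self] at this
    omega
  have heq : LinearMap.range f = LinearMap.ker (sumLM V) :=
    Submodule.eq_of_le_of_finrank_eq hrange (by rw [h2, h3])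
  have hymem : y ∈ LinearMap.ker (sumLM V) := by simp [sumLM, hy]
  rw [← heq] at hymem
  obtain ⟨u, hu⟩ := hymem
  exact ⟨u, by simpa [hf] using hu⟩

/-- Upper bound: if `M` is Metzler, `w > 0` and `M w ≤ γ w`, then any real
eigenvalue of `M` is at most `γ`. -/
lemma eig_le_of_mulVec_le [Nonempty V] (M : Matrix V V ℝ)
    (hoff : ∀ σ σ' : V, σ ≠ σ' → 0 ≤ M σ' σ)
    (w : V → ℝ) (hw : ∀ σ, 0 < w σ) (γ : ℝ)
    (hMw : ∀ σ, M.mulVec w σ ≤ γ * w σ)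
    (lam : ℝ) (v : V → ℝ) (hv : v ≠ 0) (heig : M.mulVec v = lam • v) :
    lam ≤ γ := by
  -- WLOG v has a positive entry
  have key : ∀ v : V → ℝ, (∃ σ, 0 < v σ) → M.mulVec v = lam • v → lam ≤ γ := by
    intro v hpos heig
    set g : V → ℝ := fun σ => v σ / w σ with hg
    obtain ⟨σs, -, hmax⟩ := Finset.exists_max_image (Finset.univ : Finset V) g
      ⟨Classical.arbitrary V, Finset.mem_univ _⟩
    have hmax' : ∀ σ, v σ ≤ g σs * w σ := by
      intro σ
      have h := hmax σ (Finset.mem_univ σ)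
      rw [hg] at h
      calc v σ = v σ / w σ * w σ := (div_mul_cancel₀ _ (hw σ).ne').symm
        _ ≤ g σs * w σ := by
            exact mul_le_mul_of_nonneg_right h (hw σ).le
    have hs : 0 < g σs := by
      obtain ⟨σp, hσp⟩ := hpos
      have := hmax σp (Finset.mem_univ σp)
      have : 0 < g σp := div_pos hσp (hw σp)
      linarith [hmax σp (Finset.mem_univ σp)]
    have hvs : v σs = g σs * w σs := (div_mul_cancel₀ _ (hw σs).ne').symm
    have hMv : M.mulVec v σs ≤ g σs * (M.mulVec w σs) := by
      simp only [Matrix.mulVec, dotProduct, Finset.mul_sum]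
      apply Finset.sum_le_sum
      intro τ _
      rcases eq_or_ne τ σs with rfl | hτ
      · rw [hvs]; ring_nf; exact le_refl _
      · have h0 : 0 ≤ M σs τ := hoff τ σs hτ
        calc M σs τ * v τ ≤ M σs τ * (g σs * w τ) :=
              mul_le_mul_of_nonneg_left (hmax' τ) h0
          _ = g σs * (M σs τ * w τ) := by ring
    have h1 : lam * v σs = M.mulVec v σs := by
      rw [heig]; simp
    have h2 : g σs * (M.mulVec w σs) ≤ g σs * (γ * w σs) :=
      mul_le_mul_of_nonneg_left (hMw σs) hs.le
    have := h1.le.trans (hMv.trans h2)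
    rw [hvs] at this
    have hws := hw σs
    nlinarith [mul_pos hs hws]
  rcases Classical.em (∃ σ, 0 < v σ) with h | h
  · exact key v h heig
  · push_neg at h
    apply key (-v)
    · by_contra hc
      push_neg at hc
      apply hv
      ext σ
      have h1 := h σ
      have h2 := hc σ
      simp only [Pi.neg_apply] at h2
      have : v σ = 0 := le_antisymm h1 (by linarith)
      simpa using this
    · rw [Matrix.mulVec_neg, heig]
      ext σ; simp


attribute [local instance] Matrix.linftyOpNormedRing Matrix.linftyOpNormedAlgebra

/-- Row sums of a nonnegative real matrix bound the (complexified) linfty operator norm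
from below. -/
lemma rowsum_le_opNorm (A : Matrix V V ℝ) (hA : ∀ i j, 0 ≤ A i j) (i : V) :
    ∑ j, A i j ≤ ‖A.map (Complex.ofReal)‖ := by
  rw [Matrix.linfty_opNorm_def]
  have h1 : (∑ j, ‖(A.map (Complex.ofReal)) i j‖₊ : ℝ≥0) ≤
      (Finset.univ : Finset V).sup fun i => ∑ j, ‖(A.map (Complex.ofReal)) i j‖₊ :=
    Finset.le_sup (f := fun i => ∑ j, ‖(A.map (Complex.ofReal)) i j‖₊) (Finset.mem_univ i)
  have h2 : ((∑ j, ‖(A.map (Complex.ofReal)) i j‖₊ : ℝ≥0) : ℝ) = ∑ j, A i j := by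
    push_cast
    refine Finset.sum_congr rfl fun j _ => ?_
    simp [Matrix.map_apply, Complex.norm_real, Real.norm_eq_abs, abs_of_nonneg (hA i j)]
  calc ∑ j, A i j = _ := h2.symm
    _ ≤ _ := NNReal.coe_le_coe.mpr h1

/-- Membership in the spectrum of the complexification gives a complex eigenvalue. -/
lemma isComplexEigenvalue_of_mem_spectrum (M : Matrix V V ℝ) (μ : ℂ)
    (hμ : μ ∈ spectrum ℂ (M.map (Complex.ofReal))) : M.IsComplexEigenvalue μ := by
  rw [spectrum.mem_iff] at hμ
  set X := algebraMap ℂ (Matrix V V ℂ) μ - M.map (Complex.ofReal) with hX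
  have hdet : X.det = 0 := by
    by_contra h
    exact hμ ((Matrix.isUnit_iff_isUnit_det X).mpr (isUnit_iff_ne_zero.mpr h))
  obtain ⟨v, hv0, hv⟩ := (Matrix.exists_mulVec_eq_zero_iff).mpr hdet
  refine ⟨v, hv0, ?_⟩
  have : X.mulVec v = μ • v - (M.map (Complex.ofReal)).mulVec v := by
    rw [hX, Matrix.sub_mulVec, Algebra.algebraMap_eq_smul_one, Matrix.smul_mulVec,
      Matrix.one_mulVec]
  rw [this] at hv
  exact (sub_eq_zero.mp hv).symm

/-- Spectrum shift under adding a real multiple of the identity. -/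
lemma mem_spectrum_shift (A : Matrix V V ℂ) (t : ℝ) (ν : ℂ) :
    ν ∈ spectrum ℂ (A + (t : ℂ) • (1 : Matrix V V ℂ)) ↔ (ν - t) ∈ spectrum ℂ A := by
  rw [spectrum.mem_iff, spectrum.mem_iff]
  have : algebraMap ℂ (Matrix V V ℂ) ν - (A + (t : ℂ) • 1) =
      algebraMap ℂ (Matrix V V ℂ) (ν - t) - A := by
    simp only [map_sub, Algebra.algebraMap_eq_smul_one, sub_smul]
    abel
  rw [this]


lemma exists_eigen_re_ge [Nonempty V] (M : Matrix V V ℝ)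
    (hoff : ∀ σ σ' : V, σ ≠ σ' → 0 ≤ M σ' σ)
    (w : V → ℝ) (hw : ∀ σ, 0 < w σ) (α : ℝ)
    (hMw : ∀ σ, α * w σ ≤ M.mulVec w σ) :
    ∃ μ : ℂ, M.IsComplexEigenvalue μ ∧ α ≤ μ.re := by
  classical
  haveI : CompleteSpace (Matrix V V ℂ) := FiniteDimensional.complete ℂ _
  haveI : Nontrivial (Matrix V V ℂ) :=
    ⟨0, 1, fun h => by
      simpa [Matrix.one_apply] using
        congrFun (congrFun h (Classical.arbitrary V)) (Classical.arbitrary V)⟩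
  set Mc := M.map (Complex.ofReal) with hMc
  set t₀ : ℝ := 1 + |α| + ∑ σ, |M σ σ| with ht₀
  have hsumabs : (0:ℝ) ≤ ∑ σ, |M σ σ| := Finset.sum_nonneg fun σ _ => abs_nonneg _
  have ht₀1 : 1 ≤ t₀ := by
    have := abs_nonneg α
    simp only [ht₀]
    linarith
  have key : ∀ t : ℝ, t₀ ≤ t →
      ENNReal.ofReal (α + t) ≤ spectralRadius ℂ (Mc + (t:ℂ) • 1) := by
    intro t ht
    set N : Matrix V V ℝ := M + t • 1 with hN
    have hNmap : Mc + (t:ℂ) • 1 = N.map (Complex.ofReal) := by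
      ext i j
      simp only [hN, hMc, Matrix.map_apply, Matrix.add_apply, Matrix.smul_apply,
        Matrix.one_apply]
      split_ifs <;> simp
    have hdiag : ∀ i, |M i i| ≤ ∑ σ, |M σ σ| :=
      fun i => Finset.single_le_sum (fun σ _ => abs_nonneg (M σ σ)) (Finset.mem_univ i)
    have ht1 : 1 + |α| ≤ t := by
      have := hdiag
      simp only [ht₀] at ht
      linarith
    have hN0 : ∀ i j, 0 ≤ N i j := by
      intro i j
      rcases eq_or_ne i j with rfl | hij
      · simp only [hN, Matrix.add_apply, Matrix.smul_apply, Matrix.one_apply_eq, smul_eq_mul,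
          mul_one]
        have h1 := hdiag i
        have h2 := neg_abs_le (M i i)
        have h3 := abs_nonneg α
        simp only [ht₀] at ht
        linarith
      · simp only [hN, Matrix.add_apply, Matrix.smul_apply, Matrix.one_apply_ne hij,
          smul_eq_mul, mul_zero, add_zero]
        exact hoff j i (Ne.symm hij)
    set β := α + t with hβdef
    have hβ : 1 ≤ β := by
      have := neg_abs_le α
      simp only [hβdef]
      linarith
    have hβ0 : (0:ℝ) < β := by linarith
    have hNw : ∀ σ, β * w σ ≤ N.mulVec w σ := by
      intro σ
      have hh : N.mulVec w σ = M.mulVec w σ + t * w σ := by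
        rw [hN, Matrix.add_mulVec, Matrix.smul_mulVec, Matrix.one_mulVec]
        simp
      rw [hh, hβdef, add_mul]
      linarith [hMw σ]
    have hpow : ∀ k : ℕ, (∀ i j, 0 ≤ (N^k) i j) ∧ (∀ σ, β^k * w σ ≤ (N^k).mulVec w σ) := by
      intro k
      induction k with
      | zero =>
        constructor
        · intro i j
          rw [pow_zero]
          rcases eq_or_ne i j with rfl | hij
          · simp [Matrix.one_apply_eq]
          · simp [Matrix.one_apply_ne hij]
        · intro σ
          simp [Matrix.one_mulVec]
      | succ k ih =>
        obtain ⟨ih1, ih2⟩ := ih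
        constructor
        · intro i j
          rw [pow_succ, Matrix.mul_apply]
          exact Finset.sum_nonneg fun l _ => mul_nonneg (ih1 i l) (hN0 l j)
        · intro σ
          have hstep : (N^(k+1)).mulVec w = (N^k).mulVec (N.mulVec w) := by
            rw [pow_succ, ← Matrix.mulVec_mulVec]
          rw [hstep]
          have h2 : (N^k).mulVec (fun τ => β * w τ) σ ≤ (N^k).mulVec (N.mulVec w) σ := by
            simp only [Matrix.mulVec, dotProduct]
            exact Finset.sum_le_sum fun τ _ => mul_le_mul_of_nonneg_left (hNw τ) (ih1 σ τ)
          have h3 : (N^k).mulVec (fun τ => β * w τ) σ = β * ((N^k).mulVec w σ) := by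
            simp only [Matrix.mulVec, dotProduct, Finset.mul_sum]
            exact Finset.sum_congr rfl fun τ _ => by ring
          calc β^(k+1) * w σ = β * (β^k * w σ) := by ring
            _ ≤ β * ((N^k).mulVec w σ) := mul_le_mul_of_nonneg_left (ih2 σ) hβ0.le
            _ = (N^k).mulVec (fun τ => β * w τ) σ := h3.symm
            _ ≤ _ := h2
    have σ0 : V := Classical.arbitrary V
    set W := Finset.univ.sup' Finset.univ_nonempty w with hWdef
    have hWb : ∀ σ, w σ ≤ W := fun σ => Finset.le_sup' w (Finset.mem_univ σ)
    have hWpos : 0 < W := lt_of_lt_of_le (hw σ0) (hWb σ0)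
    set c₁ := w σ0 / W with hc₁
    have hc₁pos : 0 < c₁ := div_pos (hw σ0) hWpos
    have hnorm : ∀ k : ℕ, β^k * c₁ ≤ ‖(Mc + (t:ℂ)•1)^k‖ := by
      intro k
      have hrow : β^k * w σ0 ≤ (∑ j, (N^k) σ0 j) * W := by
        calc β^k * w σ0 ≤ (N^k).mulVec w σ0 := (hpow k).2 σ0
          _ = ∑ j, (N^k) σ0 j * w j := by simp [Matrix.mulVec, dotProduct]
          _ ≤ ∑ j, (N^k) σ0 j * W :=
              Finset.sum_le_sum fun j _ => mul_le_mul_of_nonneg_left (hWb j) ((hpow k).1 σ0 j)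
          _ = _ := by rw [Finset.sum_mul]
      have hns : ∑ j, (N^k) σ0 j ≤ ‖(N^k).map (Complex.ofReal)‖ :=
        rowsum_le_opNorm _ ((hpow k).1) σ0
      have hmapk : (Mc + (t:ℂ)•1)^k = (N^k).map (Complex.ofReal) := by
        rw [hNmap]
        have := map_pow (Complex.ofRealHom.mapMatrix (m := V)) N k
        exact this.symm
      rw [hmapk, hc₁, mul_div_assoc' , div_le_iff₀ hWpos]
      calc β^k * w σ0 ≤ (∑ j, (N^k) σ0 j) * W := hrow
        _ ≤ ‖(N^k).map (Complex.ofReal)‖ * W :=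
            mul_le_mul_of_nonneg_right hns hWpos.le
    have gel := spectrum.pow_norm_pow_one_div_tendsto_nhds_spectralRadius (Mc + (t:ℂ)•1)
    have hlow : Tendsto (fun k : ℕ => ENNReal.ofReal (β * c₁ ^ (1/(k:ℝ)))) atTop
        (𝓝 (ENNReal.ofReal β)) := by
      have h1 : Tendsto (fun k : ℕ => (1/(k:ℝ))) atTop (𝓝 0) :=
        tendsto_one_div_atTop_nhds_zero_nat
      have h2 : Tendsto (fun k : ℕ => c₁ ^ (1/(k:ℝ))) atTop (𝓝 1) := by
        have hc : ∀ x : ℝ, c₁ ^ x = Real.exp (Real.log c₁ * x) :=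
          fun x => Real.rpow_def_of_pos hc₁pos x
        simp_rw [hc]
        have h3 : Tendsto (fun k : ℕ => Real.log c₁ * (1/(k:ℝ))) atTop (𝓝 0) := by
          simpa using h1.const_mul (Real.log c₁)
        have h4 := (Real.continuous_exp.tendsto 0).comp h3
        simpa [Function.comp_def] using h4
      have h5 : Tendsto (fun k : ℕ => β * c₁ ^ (1/(k:ℝ))) atTop (𝓝 β) := by
        simpa using h2.const_mul β
      exact (ENNReal.continuous_ofReal.tendsto β).comp h5
    have hle : ∀ᶠ k : ℕ in atTop, ENNReal.ofReal (β * c₁ ^ (1/(k:ℝ))) ≤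
        ENNReal.ofReal (‖(Mc + (t:ℂ)•1)^k‖ ^ (1/(k:ℝ))) := by
      filter_upwards [eventually_ge_atTop 1] with k hk
      apply ENNReal.ofReal_le_ofReal
      have hk0 : (k:ℝ) ≠ 0 := Nat.cast_ne_zero.mpr (by omega)
      have hb : β * c₁ ^ (1/(k:ℝ)) = (β^k * c₁) ^ (1/(k:ℝ)) := by
        rw [Real.mul_rpow (by positivity) hc₁pos.le]
        congr 1
        rw [← Real.rpow_natCast β k, ← Real.rpow_mul hβ0.le, mul_one_div, div_self hk0,
          Real.rpow_one]
      rw [hb]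
      exact Real.rpow_le_rpow (by positivity) (hnorm k) (by positivity)
    exact le_of_tendsto_of_tendsto hlow gel hle
  -- now the contradiction argument
  by_contra hcon
  push_neg at hcon
  have hspec : ∀ μ ∈ spectrum ℂ Mc, μ.re < α := fun μ hμ =>
    hcon μ (isComplexEigenvalue_of_mem_spectrum M μ hμ)
  have hne : (spectrum ℂ Mc).Nonempty := spectrum.nonempty Mc
  obtain ⟨μs, hμs, hmaxs⟩ := (spectrum.isCompact Mc).exists_isMaxOn hne
    (Complex.continuous_re.continuousOn)
  set η := α - μs.re with hη
  have hηpos : 0 < η := by have := hspec μs hμs; simp only [hη]; linarith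
  set RM := ‖Mc‖ with hRM
  have hRM0 : 0 ≤ RM := norm_nonneg _
  have hRMb : ∀ μ ∈ spectrum ℂ Mc, ‖μ‖ ≤ RM := fun μ hμ => spectrum.norm_le_norm_of_mem hμ
  set t := t₀ + RM + |α| + η + RM^2/(2*η) with htdef
  have hdivpos : 0 ≤ RM^2/(2*η) := by positivity
  have ht : t₀ ≤ t := by
    simp only [htdef]
    have := abs_nonneg α
    linarith
  have hαt : 1 ≤ α + t := by
    have := neg_abs_le α
    simp only [htdef]
    linarith
  have hkey := key t ht
  set γ := Real.sqrt ((α - η + t)^2 + RM^2) with hγ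
  have hub : spectralRadius ℂ (Mc + (t:ℂ)•1) ≤ ENNReal.ofReal γ := by
    show (⨆ ν ∈ spectrum ℂ (Mc + (t:ℂ)•1), (‖ν‖₊ : ℝ≥0∞)) ≤ _
    refine iSup₂_le fun ν hν => ?_
    have hν' : ν - t ∈ spectrum ℂ Mc := (mem_spectrum_shift Mc t ν).mp hν
    have hre : (ν - (t:ℂ)).re ≤ α - η := by
      have h := hmaxs hν'
      simp only [hη]
      simpa using h
    have hre2 : -RM ≤ (ν - (t:ℂ)).re := by
      have h1 := hRMb _ hν'
      have h2 : |(ν - (t:ℂ)).re| ≤ ‖ν - (t:ℂ)‖ := by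
        exact Complex.abs_re_le_norm _
      exact (abs_le.mp (h2.trans h1)).1
    have him : |(ν - (t:ℂ)).im| ≤ RM := by
      have h1 := hRMb _ hν'
      have h2 := Complex.abs_im_le_norm (ν - (t:ℂ))
      linarith
    have hnν : ‖ν‖ ≤ γ := by
      have hν2 : ‖ν‖^2 = ((ν - (t:ℂ)).re + t)^2 + ((ν - (t:ℂ)).im)^2 := by
        have e1 : (ν - (t:ℂ)).re + t = ν.re := by simp
        have e2 : (ν - (t:ℂ)).im = ν.im := by simp
        rw [e1, e2, Complex.sq_norm, Complex.normSq_apply]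
        ring
      have htRM : RM ≤ t := by
        rw [htdef]
        have := abs_nonneg α
        linarith
      have hret : 0 ≤ (ν - (t:ℂ)).re + t := by linarith
      have hsq : ‖ν‖^2 ≤ (α - η + t)^2 + RM^2 := by
        rw [hν2]
        have h1 : ((ν - (t:ℂ)).re + t)^2 ≤ (α - η + t)^2 := by
          have : (ν - (t:ℂ)).re + t ≤ α - η + t := by linarith
          nlinarith
        have h2 : ((ν - (t:ℂ)).im)^2 ≤ RM^2 := by
          nlinarith [abs_nonneg ((ν - (t:ℂ)).im), sq_abs ((ν - (t:ℂ)).im)]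
        linarith
      rw [hγ]
      rw [show ‖ν‖ = Real.sqrt (‖ν‖^2) from (Real.sqrt_sq (norm_nonneg ν)).symm]
      exact Real.sqrt_le_sqrt hsq
    exact le_of_eq_of_le (ofReal_norm ν).symm (ENNReal.ofReal_le_ofReal hnν)
  have hcontra := hkey.trans hub
  rw [ENNReal.ofReal_le_ofReal_iff (Real.sqrt_nonneg _)] at hcontra
  obtain ⟨d, hd0, hd1, hd2⟩ : ∃ d : ℝ, 0 ≤ d ∧ RM^2 = 2*η*d ∧ t = t₀+RM+|α|+η+d :=
    ⟨RM^2/(2*η), hdivpos, by field_simp, htdef⟩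
  have hat : 1 + η + d ≤ α + t := by
    rw [hd2]
    have := neg_abs_le α
    linarith
  have hsqlt : (α - η + t)^2 + RM^2 < (α + t)^2 := by
    nlinarith [mul_le_mul_of_nonneg_left hat hηpos.le, hd1, hηpos, sq_nonneg η]
  have : γ < α + t := by
    rw [hγ]
    rw [show α + t = Real.sqrt ((α+t)^2) from (Real.sqrt_sq (by linarith)).symm]
    exact Real.sqrt_lt_sqrt (by positivity) hsqlt
  linarith


end Aux


/-- **Perturbative growth rate of a reversible Markov generator.**
If `A⁰` is an irreducible Markov generator (columns sum to zero, nonnegative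
off-diagonal entries) satisfying detailed balance w.r.t. a positive probability
vector `π⁰`, and `B` is Metzler, then the top eigenvalue `λ(ε)` of `A⁰ + ε B`
satisfies `λ(ε)/ε → ∑_σ κ_σ(B) π⁰_σ` as `ε → 0⁺`, where `κ_σ(B)` is the `σ`-th
column sum of `B`. -/
theorem perturbative_growth_rate {V : Type*} [Fintype V] [DecidableEq V] [Nonempty V]
    (A0 B : Matrix V V ℝ)
    (hA0off : ∀ σ σ' : V, σ ≠ σ' → 0 ≤ A0 σ' σ)
    (hA0col : ∀ σ : V, ∑ σ', A0 σ' σ = 0)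
    (hirr : A0.IsIrreducibleMetzlerChain)
    (π0 : V → ℝ) (hπpos : ∀ σ, 0 < π0 σ) (hπsum : ∑ σ, π0 σ = 1)
    (hdb : ∀ σ σ' : V, π0 σ * A0 σ' σ = π0 σ' * A0 σ σ')
    (hBoff : ∀ σ σ' : V, σ ≠ σ' → 0 ≤ B σ' σ)
    (ε₁ : ℝ) (hε₁ : 0 < ε₁) (lam : ℝ → ℝ)
    (hlam : ∀ ε ∈ Set.Ioo 0 ε₁,
      (∃ v : V → ℝ, v ≠ 0 ∧ (A0 + ε • B).mulVec v = lam ε • v) ∧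
      ∀ μ : ℂ, (A0 + ε • B).IsComplexEigenvalue μ → μ.re ≤ lam ε) :
    Filter.Tendsto (fun ε => lam ε / ε) (nhdsWithin 0 (Set.Ioi 0))
      (nhds (∑ σ, (∑ σ', B σ' σ) * π0 σ)) := by
  classical
  set c := ∑ σ, (∑ σ', B σ' σ) * π0 σ with hc
  -- A0 annihilates π0
  have hA0π : A0.mulVec π0 = 0 := by
    ext σ'
    simp only [Matrix.mulVec, dotProduct, Pi.zero_apply]
    calc ∑ σ, A0 σ' σ * π0 σ = ∑ σ, π0 σ' * A0 σ σ' :=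
          Finset.sum_congr rfl fun σ _ => by rw [mul_comm]; exact hdb σ σ'
      _ = π0 σ' * ∑ σ, A0 σ σ' := by rw [Finset.mul_sum]
      _ = 0 := by rw [hA0col σ']; ring
  -- sum of B.mulVec π0 equals c
  have hsumB : ∑ σ', B.mulVec π0 σ' = c := by
    simp only [Matrix.mulVec, dotProduct]
    rw [Finset.sum_comm, hc]
    exact Finset.sum_congr rfl fun σ _ => by rw [Finset.sum_mul]
  -- solve the first-order corrector equation
  obtain ⟨u, hu⟩ := exists_solution A0 hA0col π0 hπpos hA0π
    (fun v hv => ker_span A0 hA0off hirr π0 hπpos hA0π v hv)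
    (fun σ => c * π0 σ - B.mulVec π0 σ)
    (by
      rw [Finset.sum_sub_distrib, hsumB, ← Finset.mul_sum, hπsum, mul_one, sub_self])
  have hu' : ∀ σ, A0.mulVec u σ = c * π0 σ - B.mulVec π0 σ := fun σ => congrFun hu σ
  -- constants
  obtain ⟨σm, -, hπm⟩ := Finset.exists_min_image (Finset.univ : Finset V) π0
    ⟨Classical.arbitrary V, Finset.mem_univ _⟩
  set pm := π0 σm with hpm
  have hpm0 : 0 < pm := hπpos σm
  have hpmle : ∀ σ, pm ≤ π0 σ := fun σ => hπm σ (Finset.mem_univ σ)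
  set R : V → ℝ := fun σ => B.mulVec u σ - c * u σ with hR
  set S := ∑ σ, |R σ| with hS
  have hS0 : 0 ≤ S := Finset.sum_nonneg fun σ _ => abs_nonneg _
  have hSle : ∀ σ, |R σ| ≤ S :=
    fun σ => Finset.single_le_sum (fun τ _ => abs_nonneg (R τ)) (Finset.mem_univ σ)
  set U := ∑ σ, |u σ| with hU
  have hU0 : 0 ≤ U := Finset.sum_nonneg fun σ _ => abs_nonneg _
  have hUle : ∀ σ, |u σ| ≤ U :=
    fun σ => Finset.single_le_sum (fun τ _ => abs_nonneg (u τ)) (Finset.mem_univ σ)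
  clear_value R S U pm
  obtain ⟨K, hK0, hKpm⟩ : ∃ K : ℝ, 0 < K ∧ K * (pm/2) = S + 1 :=
    ⟨2*(S+1)/pm, by positivity, by field_simp⟩
  set ε₂ := min ε₁ (pm/(2*(U+1))) with hε₂
  have hε₂0 : 0 < ε₂ := lt_min hε₁ (by positivity)
  have hε₂ε₁ : ε₂ ≤ ε₁ := min_le_left _ _
  -- the main two-sided estimate
  have main : ∀ ε ∈ Set.Ioo (0:ℝ) ε₂, c - K*ε ≤ lam ε / ε ∧ lam ε / ε ≤ c + K*ε := by
    rintro ε ⟨hε0, hεlt⟩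
    have hεε₁ : ε < ε₁ := lt_of_lt_of_le hεlt hε₂ε₁
    set M := A0 + ε • B with hM
    set w : V → ℝ := fun σ => π0 σ + ε * u σ with hw
    have hεU : ε * (U + 1) ≤ pm/2 := by
      have h1 : ε ≤ pm/(2*(U+1)) := le_of_lt (lt_of_lt_of_le hεlt (min_le_right _ _))
      have h2 : ε*(U+1) ≤ pm/(2*(U+1)) * (U+1) :=
        mul_le_mul_of_nonneg_right h1 (by positivity)
      have h3 : pm/(2*(U+1)) * (U+1) = pm/2 := by
        field_simp
      linarith
    have hwpos : ∀ σ, pm/2 ≤ w σ := by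
      intro σ
      have h1 : -(ε * U) ≤ ε * u σ := by
        have := hUle σ
        have := (abs_le.mp (le_refl |u σ|))
        nlinarith [neg_abs_le (u σ), hUle σ, hε0.le]
      have h2 : ε * U ≤ pm/2 := by nlinarith [hε0.le]
      have := hpmle σ
      simp only [hw]
      linarith
    have hwpos' : ∀ σ, 0 < w σ := fun σ => lt_of_lt_of_le (by positivity) (hwpos σ)
    -- the key componentwise computation
    have hmw : ∀ σ, M.mulVec w σ = ε * c * w σ + ε^2 * R σ := by
      intro σ
      have hsplit : ∀ (X : Matrix V V ℝ), X.mulVec w σ = X.mulVec π0 σ + ε * X.mulVec u σ := by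
        intro X
        simp only [hw, Matrix.mulVec, dotProduct, Finset.mul_sum]
        rw [← Finset.sum_add_distrib]
        exact Finset.sum_congr rfl fun τ _ => by ring
      have hMsplit : M.mulVec w σ = A0.mulVec w σ + ε * B.mulVec w σ := by
        rw [hM, Matrix.add_mulVec, Matrix.smul_mulVec]
        simp
      rw [hMsplit, hsplit A0, hsplit B]
      have h0 : A0.mulVec π0 σ = 0 := by rw [hA0π]; rfl
      rw [h0, hu' σ, hR]
      simp only [hw]
      ring
    have hKw : ∀ σ, S ≤ K * w σ := by
      intro σ
      have h2 := mul_le_mul_of_nonneg_left (hwpos σ) hK0.le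
      calc S ≤ S + 1 := by linarith
        _ = K * (pm/2) := hKpm.symm
        _ ≤ K * w σ := h2
    have hub : ∀ σ, M.mulVec w σ ≤ (ε*c + K*ε^2) * w σ := by
      intro σ
      rw [hmw σ]
      have h1 : ε^2 * R σ ≤ ε^2 * S := by
        nlinarith [abs_le.mp (le_refl |R σ|), hSle σ, sq_nonneg ε, le_abs_self (R σ)]
      have h2 : ε^2 * S ≤ ε^2 * (K * w σ) := mul_le_mul_of_nonneg_left (hKw σ) (sq_nonneg ε)
      nlinarith [h1, h2]
    have hlb : ∀ σ, (ε*c - K*ε^2) * w σ ≤ M.mulVec w σ := by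
      intro σ
      rw [hmw σ]
      have h1 : -(ε^2 * S) ≤ ε^2 * R σ := by
        nlinarith [neg_abs_le (R σ), hSle σ, sq_nonneg ε]
      have h2 : ε^2 * S ≤ ε^2 * (K * w σ) := mul_le_mul_of_nonneg_left (hKw σ) (sq_nonneg ε)
      nlinarith [h1, h2]
    have hMoff : ∀ σ σ' : V, σ ≠ σ' → 0 ≤ M σ' σ := by
      intro σ σ' hne
      rw [hM]
      simp only [Matrix.add_apply, Matrix.smul_apply, smul_eq_mul]
      have := hA0off σ σ' hne
      have := hBoff σ σ' hne
      nlinarith [hε0.le]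
    obtain ⟨⟨v, hv0, hveig⟩, hmax⟩ := hlam ε ⟨hε0, hεε₁⟩
    have hUB : lam ε ≤ ε*c + K*ε^2 :=
      eig_le_of_mulVec_le M hMoff w hwpos' _ hub (lam ε) v hv0 hveig
    have hLB : ε*c - K*ε^2 ≤ lam ε := by
      obtain ⟨μ, hμeig, hμre⟩ := exists_eigen_re_ge M hMoff w hwpos' _ hlb
      exact le_trans hμre (hmax μ hμeig)
    constructor
    · rw [le_div_iff₀ hε0]
      nlinarith [hLB]
    · rw [div_le_iff₀ hε0]
      nlinarith [hUB]
  -- squeeze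
  have hmem : Set.Ioo (0:ℝ) ε₂ ∈ nhdsWithin (0:ℝ) (Set.Ioi 0) :=
    Ioo_mem_nhdsGT_of_mem (by constructor <;> simp [hε₂0])
  have hg : Filter.Tendsto (fun ε => c - K*ε) (nhdsWithin 0 (Set.Ioi 0)) (nhds c) := by
    have : Filter.Tendsto (fun ε : ℝ => c - K*ε) (nhds 0) (nhds (c - K*0)) :=
      (tendsto_const_nhds.sub (tendsto_const_nhds.mul tendsto_id))
    rw [mul_zero, sub_zero] at this
    exact this.mono_left nhdsWithin_le_nhds
  have hh : Filter.Tendsto (fun ε => c + K*ε) (nhdsWithin 0 (Set.Ioi 0)) (nhds c) := by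
    have : Filter.Tendsto (fun ε : ℝ => c + K*ε) (nhds 0) (nhds (c + K*0)) :=
      (tendsto_const_nhds.add (tendsto_const_nhds.mul tendsto_id))
    rw [mul_zero, add_zero] at this
    exact this.mono_left nhdsWithin_le_nhds
  refine tendsto_of_tendsto_of_tendsto_of_le_of_le' hg hh ?_ ?_
  · filter_upwards [hmem] with ε hε
    exact (main ε hε).1
  · filter_upwards [hmem] with ε hε
    exact (main ε hε).2
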